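/- For all integers m, n, k, j ≥ 0, the (dinv, area) q,t-enumerator of doubly decorated reduced polyominoes satisfies RP_{q,t}(m∖(m+1), n)^{∗k,j} = δ_{k,0} · q^{binom(j,2)} · qbinom(m+1, j)_q · qbinom(m+n−j, m)_q, where δ_{k,0} = 1 if k = 0 and 0 otherwise, and binom(j,2) = j(j−1)/2. -/

import Mathlib

open Finset

attribute [local instance] Classical.propDecidable

noncomputable section

/-- The ring of polynomials in the two variables `q` and `t` with integer coefficients. -/
abbrev R2 : Type := MvPolynomial (Fin 2) ℤ

/-- The variable `q`. -/
def qv : R2 := MvPolynomial.X 0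

/-- The variable `t`. -/
def tv : R2 := MvPolynomial.X 1

/-- The Gaussian binomial coefficient `[N choose k]_q`, defined via the q-Pascal
recursion `[N+1, k+1]_q = [N, k]_q + q^(k+1) [N, k+1]_q`; it agrees with
`[N]_q! / ([k]_q! [N-k]_q!)` for `0 ≤ k ≤ N` and vanishes for `k > N`. -/
def qBinom : ℕ → ℕ → R2
  | _, 0 => 1
  | 0, _ + 1 => 0
  | N + 1, k + 1 => qBinom N k + qv ^ (k + 1) * qBinom N (k + 1)

/-- The Gaussian binomial coefficient with integer arguments:
it is `0` unless `0 ≤ k ≤ N`. -/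
def qBinomZ (N k : ℤ) : R2 :=
  if 0 ≤ k ∧ k ≤ N then qBinom N.toNat k.toNat else 0

/-! ## Reduced parallelogram polyominoes: area-word model

The letters of the alphabet `0 < 0̄ < 1 < 1̄ < 2 < 2̄ < ⋯` are encoded as
natural numbers: `2v` is the unbarred letter of value `v` and `2v + 1` is the
barred letter of value `v`; the successor in the alphabet is `+1`. -/

/-- Candidate objects: (area word, decorated unbarred rises, decorated barred
rises).  The area word of an `m × n` reduced polyomino has `m + n + 1` letters,
each bounded by its position. -/
abbrev RPCand (m n : ℕ) :=
  (Fin (m + n + 1) → Fin (2 * (m + n + 1))) ×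
    Finset (Fin (m + n + 1)) × Finset (Fin (m + n + 1))

/-- `c` is the area word of an `m × n` reduced polyomino: it starts with the
unbarred letter `0`, whenever a letter is strictly smaller than the next one
the latter is its successor in the alphabet, and it has `m + 1` unbarred
letters and `n` barred letters. -/
def IsRPWord (m n : ℕ) (c : Fin (m + n + 1) → Fin (2 * (m + n + 1))) : Prop :=
  (∀ i, i.1 = 0 → (c i : ℕ) = 0) ∧
    (∀ i j, j.1 = i.1 + 1 → (c j : ℕ) ≤ (c i : ℕ) + 1) ∧
    (univ.filter fun i => (c i : ℕ) % 2 = 0).card = m + 1 ∧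
    (univ.filter fun i => (c i : ℕ) % 2 = 1).card = n

/-- An unbarred rise: an unbarred letter which is the successor (in the
alphabet) of the letter immediately to its left. -/
def IsUnbarredRise {L L' : ℕ} (c : Fin L → Fin L') (i : Fin L) : Prop :=
  (c i : ℕ) % 2 = 0 ∧ ∃ j : Fin L, i.1 = j.1 + 1 ∧ (c i : ℕ) = (c j : ℕ) + 1

/-- A barred rise: a barred letter which is the successor (in the alphabet) of
the letter immediately to its left. -/
def IsBarredRise {L L' : ℕ} (c : Fin L → Fin L') (i : Fin L) : Prop :=
  (c i : ℕ) % 2 = 1 ∧ ∃ j : Fin L, i.1 = j.1 + 1 ∧ (c i : ℕ) = (c j : ℕ) + 1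

/-- Membership in `RP(m∖r, n)^{∗k, j}`: an `m × n` reduced polyomino with `k`
decorated unbarred rises, `j` decorated barred rises, and exactly `r` letters
equal to `0` in its area word (including the initial one). -/
def IsRPstar (m n r k j : ℕ) (x : RPCand m n) : Prop :=
  IsRPWord m n x.1 ∧
    (∀ i ∈ x.2.1, IsUnbarredRise x.1 i) ∧ x.2.1.card = k ∧
    (∀ i ∈ x.2.2, IsBarredRise x.1 i) ∧ x.2.2.card = j ∧
    (univ.filter fun i => (x.1 i : ℕ) = 0).card = r

/-- The area: the sum of the letters of the area word disregarding bars, not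
counting decorated rises of either type. -/
def areaRPstar {m n : ℕ} (x : RPCand m n) : ℕ :=
  ∑ i ∈ univ.filter (fun i => i ∉ x.2.1 ∧ i ∉ x.2.2), (x.1 i : ℕ) / 2

/-- The dinv: the number of pairs `i < j` such that the `i`-th letter of the
area word is the successor, in the alphabet, of the `j`-th letter. -/
def dinvRPstar {m n : ℕ} (x : RPCand m n) : ℕ :=
  (univ.filter fun p : Fin (m + n + 1) × Fin (m + n + 1) =>
    p.1 < p.2 ∧ (x.1 p.1 : ℕ) = (x.1 p.2 : ℕ) + 1).card

/-- The `(dinv, area)` q,t-enumerator `RP_{q,t}(m∖r, n)^{∗k, j}`;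
it is `0` if some parameter is negative. -/
def RPdE (m n r k j : ℤ) : R2 :=
  if 0 ≤ m ∧ 0 ≤ n ∧ 0 ≤ r ∧ 0 ≤ k ∧ 0 ≤ j then
    ∑ x ∈ univ.filter (IsRPstar m.toNat n.toNat r.toNat k.toNat j.toNat),
      qv ^ dinvRPstar x * tv ^ areaRPstar x
  else 0

lemma qBinom_zero (N : ℕ) : qBinom N 0 = 1 := by cases N <;> rfl

lemma qBinom_succ_succ (N k : ℕ) :
    qBinom (N + 1) (k + 1) = qBinom N k + qv ^ (k + 1) * qBinom N (k + 1) := rfl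

lemma qBinom_eq_zero_of_lt : ∀ {N k : ℕ}, N < k → qBinom N k = 0 := by
  intro N
  induction N with
  | zero => intro k h; cases k with
    | zero => omega
    | succ k => rfl
  | succ N ih =>
    intro k h
    cases k with
    | zero => omega
    | succ k =>
      rw [qBinom_succ_succ, ih (by omega), ih (by omega)]
      ring

lemma qBinom_self : ∀ N : ℕ, qBinom N N = 1 := by
  intro N
  induction N with
  | zero => rfl
  | succ N ih =>
    rw [qBinom_succ_succ, ih, qBinom_eq_zero_of_lt (by omega)]
    ring

lemma qBinom_one_eq (N : ℕ) : qBinom N 1 = ∑ i ∈ range N, qv ^ i := by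
  induction N with
  | zero => simp [qBinom_eq_zero_of_lt]
  | succ N ih =>
    rw [qBinom_succ_succ, qBinom_zero, ih]
    have h1 : ∑ i ∈ range (N+1), qv ^ i = qv * ∑ i ∈ range N, qv ^ i + 1 :=
      geom_sum_succ
    rw [h1]; ring

/-- the second Pascal recursion -/
lemma qBinom_pascal2 : ∀ (N : ℕ) {k : ℕ}, k ≤ N →
    qBinom (N + 1) (k + 1) = qBinom N (k + 1) + qv ^ (N - k) * qBinom N k := by
  intro N
  induction N with
  | zero =>
    intro k hk
    interval_cases k
    simp [qBinom_self, qBinom_eq_zero_of_lt, qBinom_zero]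
  | succ N ih =>
    intro k hk
    cases k with
    | zero =>
      rw [qBinom_succ_succ, qBinom_zero, qBinom_one_eq]
      have h1 : ∑ i ∈ range (N+1+1), qv ^ i = qv * ∑ i ∈ range (N+1), qv ^ i + 1 :=
        geom_sum_succ
      have h2 : ∑ i ∈ range (N+1+1), qv ^ i = qv ^ (N+1) + ∑ i ∈ range (N+1), qv ^ i :=
        geom_sum_succ'
      have h3 : N + 1 - 0 = N + 1 := by omega
      rw [h3]
      linear_combination h2 - h1
    | succ k =>
      rcases Nat.lt_or_ge k N with h | h
      · obtain ⟨d, rfl⟩ : ∃ d, N = k + 1 + d := ⟨N - (k+1), by omega⟩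
        have hNk : k + 1 + d + 1 - (k + 1) = d + 1 := by omega
        have hNk2 : k + 1 + d - (k + 1) = d := by omega
        have hNk3 : k + 1 + d - k = d + 1 := by omega
        rw [hNk]
        conv_rhs => rw [qBinom_succ_succ, qBinom_succ_succ]
        conv_lhs => rw [qBinom_succ_succ]
        rw [ih (by omega), ih (by omega), hNk2, hNk3]
        ring
      · have hk' : k = N := by omega
        subst hk'
        have e1 : qBinom (k+1+1) (k+1+1) = 1 := qBinom_self _
        have e2 : qBinom (k+1) (k+1+1) = 0 := qBinom_eq_zero_of_lt (by omega)
        have e3 : qBinom (k+1) (k+1) = 1 := qBinom_self _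
        rw [qBinom_succ_succ, e2, e3]
        simp
/-- binary words of length `L` with a set of marked positions -/
abbrev Obj (L : ℕ) := (Fin L → Bool) × Finset (Fin L)

def cntF {L : ℕ} (w : Fin L → Bool) : ℕ := (univ.filter fun i => w i = false).card
def cntT {L : ℕ} (w : Fin L → Bool) : ℕ := (univ.filter fun i => w i = true).card

def invW {L : ℕ} (w : Fin L → Bool) : ℕ :=
  (univ.filter fun p : Fin L × Fin L => p.1 < p.2 ∧ w p.1 = true ∧ w p.2 = false).card

def Marked {L : ℕ} (w : Fin L → Bool) (M : Finset (Fin L)) : Prop :=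
  ∀ i ∈ M, w i = true ∧ ∃ i' : Fin L, i.1 = i'.1 + 1 ∧ w i' = false

def PC {L : ℕ} (a b j : ℕ) (x : Obj L) : Prop :=
  cntF x.1 = a ∧ cntT x.1 = b ∧ Marked x.1 x.2 ∧ x.2.card = j

def S (L a b j : ℕ) : R2 :=
  ∑ x ∈ (univ : Finset (Obj L)).filter (PC a b j), qv ^ invW x.1

lemma cntF_eq_sum {L : ℕ} (w : Fin L → Bool) :
    cntF w = ∑ i, if w i = false then 1 else 0 := by
  rw [cntF, card_filter]

lemma cntT_eq_sum {L : ℕ} (w : Fin L → Bool) :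
    cntT w = ∑ i, if w i = true then 1 else 0 := by
  rw [cntT, card_filter]

lemma cntF_add_cntT {L : ℕ} (w : Fin L → Bool) : cntF w + cntT w = L := by
  rw [cntF_eq_sum, cntT_eq_sum, ← Finset.sum_add_distrib]
  have : ∀ i : Fin L, ((if w i = false then 1 else 0) + if w i = true then 1 else 0) = 1 := by
    intro i; cases h : w i <;> simp
  simp only [this, Finset.sum_const, card_univ, Fintype.card_fin, smul_eq_mul, mul_one]

lemma cntF_cons {L : ℕ} (x : Bool) (w : Fin L → Bool) :
    cntF (Fin.cons x w) = (if x = false then 1 else 0) + cntF w := by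
  rw [cntF_eq_sum, cntF_eq_sum, Fin.sum_univ_succ]
  simp [Fin.cons_zero, Fin.cons_succ]

lemma cntT_cons {L : ℕ} (x : Bool) (w : Fin L → Bool) :
    cntT (Fin.cons x w) = (if x = true then 1 else 0) + cntT w := by
  rw [cntT_eq_sum, cntT_eq_sum, Fin.sum_univ_succ]
  simp [Fin.cons_zero, Fin.cons_succ]

lemma invW_eq_sum {L : ℕ} (w : Fin L → Bool) :
    invW w = ∑ i, ∑ j, if i < j ∧ w i = true ∧ w j = false then 1 else 0 := by
  rw [invW, card_filter]
  exact Fintype.sum_prod_type (f := fun p : Fin L × Fin L =>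
    if p.1 < p.2 ∧ w p.1 = true ∧ w p.2 = false then (1:ℕ) else 0)

lemma invW_cons {L : ℕ} (x : Bool) (w : Fin L → Bool) :
    invW (Fin.cons x w) = (if x = true then cntF w else 0) + invW w := by
  rw [invW_eq_sum, invW_eq_sum, Fin.sum_univ_succ]
  congr 1
  · -- inner sum over j for i = 0
    rw [Fin.sum_univ_succ]
    simp only [Fin.cons_zero, Fin.cons_succ]
    rw [cntF_eq_sum]
    have h0 : ¬ ((0 : Fin (L+1)) < 0) := lt_irrefl _
    cases x with
    | false => simp
    | true =>
      simp only [h0, false_and, if_false, if_true, zero_add]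
      apply Finset.sum_congr rfl
      intro jj _
      have : (0 : Fin (L+1)) < Fin.succ jj := Fin.succ_pos jj
      simp [this]
  · -- remaining terms
    apply Finset.sum_congr rfl
    intro i _
    rw [Fin.sum_univ_succ]
    have h0 : ¬ (Fin.succ i < (0 : Fin (L+1))) := by simp
    simp only [h0, false_and, if_false, zero_add, Fin.cons_succ, Fin.succ_lt_succ_iff]
-- shift machinery (appended after model)
def shiftDown {L : ℕ} (M : Finset (Fin (L+1))) : Finset (Fin L) :=
  univ.filter fun i => i.succ ∈ M

lemma mem_shiftDown {L : ℕ} {M : Finset (Fin (L+1))} {i : Fin L} :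
    i ∈ shiftDown M ↔ i.succ ∈ M := by simp [shiftDown]

lemma fin_pred {L : ℕ} (p : Fin (L+1)) (c : ℕ) (h : p.1 = c + 1) :
    ∃ p' : Fin L, p = p'.succ ∧ p'.1 = c := by
  refine ⟨⟨c, by omega⟩, ?_, rfl⟩
  apply Fin.ext
  simp [h]

lemma zero_not_mem_marked {L : ℕ} {w : Fin (L+1) → Bool} {M : Finset (Fin (L+1))}
    (hM : Marked w M) : (0 : Fin (L+1)) ∉ M := by
  intro h0
  obtain ⟨-, p, hp, -⟩ := hM 0 h0
  simp at hp

lemma map_shiftDown {L : ℕ} {M : Finset (Fin (L+1))} (h0 : (0 : Fin (L+1)) ∉ M) :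
    (shiftDown M).map (Fin.succEmb L) = M := by
  ext i
  simp only [mem_map, mem_shiftDown]
  constructor
  · rintro ⟨i', hi', rfl⟩; exact hi'
  · intro hi
    rcases Nat.eq_zero_or_pos i.1 with h | h
    · exact absurd hi (by rwa [show i = 0 from Fin.ext h])
    · obtain ⟨i', rfl, -⟩ := fin_pred i (i.1 - 1) (by omega)
      exact ⟨i', hi, rfl⟩

lemma shiftDown_map {L : ℕ} (M : Finset (Fin L)) :
    shiftDown (M.map (Fin.succEmb L)) = M := by
  ext i
  simp only [mem_shiftDown, mem_map]
  constructor
  · rintro ⟨i', hi', he⟩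
    rwa [show i' = i from Fin.succ_injective _ he] at hi'
  · intro hi; exact ⟨i, hi, rfl⟩

lemma card_shiftDown {L : ℕ} {M : Finset (Fin (L+1))} (h0 : (0 : Fin (L+1)) ∉ M) :
    (shiftDown M).card = M.card := by
  conv_rhs => rw [← map_shiftDown h0]
  rw [card_map]

lemma marked_card_le_cntT {L : ℕ} {w : Fin L → Bool} {M : Finset (Fin L)}
    (hM : Marked w M) : M.card ≤ cntT w := by
  apply card_le_card
  intro i hi
  simp only [cntT, mem_filter, mem_univ, true_and]
  exact (hM i hi).1
/-- prepending `true` -/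
lemma sumT1 (L a b j : ℕ) :
    ∑ x ∈ (univ : Finset (Obj (L+1))).filter
        (fun x => PC a (b+1) j x ∧ x.1 0 = true), qv ^ invW x.1
      = qv ^ a * S L a b j := by
  rw [S, mul_sum]
  refine Finset.sum_nbij'
    (fun x => (Fin.tail x.1, shiftDown x.2))
    (fun y => (Fin.cons true y.1, y.2.map (Fin.succEmb L))) ?_ ?_ ?_ ?_ ?_
  · -- forward membership
    rintro ⟨w, M⟩ hx
    simp only [mem_filter, mem_univ, true_and] at hx; simp only [PC] at hx
    obtain ⟨⟨hF, hT, hMk, hcard⟩, h0⟩ := hx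
    try dsimp only at hF hT hMk hcard h0
    have hw : w = Fin.cons true (Fin.tail w) := by
      rw [← h0, Fin.cons_self_tail]
    simp only [mem_filter, mem_univ, true_and]; simp only [PC]
    refine ⟨?_, ?_, ?_, ?_⟩
    · have h1 := cntF_cons true (Fin.tail w)
      rw [← hw] at h1
      rw [h1] at hF
      simpa using hF
    · have h1 := cntT_cons true (Fin.tail w)
      rw [← hw] at h1
      rw [h1] at hT
      simp at hT
      omega
    · intro i' hi'
      rw [mem_shiftDown] at hi'
      obtain ⟨ht, p, hp, hpf⟩ := hMk _ hi'
      refine ⟨ht, ?_⟩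
      have hp1 : p.1 = i'.1 := by simp [Fin.val_succ] at hp; omega
      rcases Nat.eq_zero_or_pos i'.1 with h | h
      · exfalso
        have hpz : p = 0 := Fin.ext (by rw [Fin.val_zero]; omega)
        rw [hpz, h0] at hpf
        exact absurd hpf (by simp)
      · obtain ⟨p', rfl, hp'v⟩ := fin_pred p (p.1 - 1) (by omega)
        refine ⟨p', by simp [Fin.val_succ] at hp1 hp'v ⊢; omega, hpf⟩
    · rw [card_shiftDown (zero_not_mem_marked hMk)]; exact hcard
  · -- backward membership
    rintro ⟨w', M'⟩ hy
    simp only [mem_filter, mem_univ, true_and] at hy ⊢; simp only [PC] at hy ⊢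
    obtain ⟨hF, hT, hMk, hcard⟩ := hy
    try dsimp only at hF hT hMk hcard ⊢
    refine ⟨⟨?_, ?_, ?_, ?_⟩, by simp⟩
    · rw [cntF_cons]; simpa using hF
    · rw [cntT_cons]; simp [hT]; omega
    · intro i hi
      simp only [mem_map] at hi
      obtain ⟨i₀, hi₀, rfl⟩ := hi
      obtain ⟨ht, p', hp', hpf⟩ := hMk _ hi₀
      refine ⟨by simpa [Fin.cons_succ] using ht, p'.succ, ?_, ?_⟩
      · show ((Fin.succEmb L) i₀).1 = p'.succ.1 + 1
        simp [Fin.val_succ, hp']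
      · simpa [Fin.cons_succ] using hpf
    · rw [card_map]; exact hcard
  · -- left inverse
    rintro ⟨w, M⟩ hx
    simp only [mem_filter, mem_univ, true_and] at hx; simp only [PC] at hx
    obtain ⟨⟨-, -, hMk, -⟩, h0⟩ := hx
    try dsimp only at hMk h0 ⊢
    refine Prod.ext ?_ ?_
    · show Fin.cons true (Fin.tail w) = w
      rw [← h0, Fin.cons_self_tail]
    · show (shiftDown M).map (Fin.succEmb L) = M
      exact map_shiftDown (zero_not_mem_marked hMk)
  · -- right inverse
    rintro ⟨w', M'⟩ _
    beta_reduce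
    rw [shiftDown_map, Fin.tail_cons (α := fun _ : Fin (L+1) => Bool)]
  · -- values
    rintro ⟨w, M⟩ hx
    simp only [mem_filter, mem_univ, true_and] at hx; simp only [PC] at hx
    obtain ⟨⟨hF, -, -, -⟩, h0⟩ := hx
    dsimp only at hF h0 ⊢
    have hw : w = Fin.cons true (Fin.tail w) := by
      rw [← h0, Fin.cons_self_tail]
    have hiw : invW w = cntF (Fin.tail w) + invW (Fin.tail w) := by
      conv_lhs => rw [hw]
      rw [invW_cons]; simp
    have hFt : cntF (Fin.tail w) = a := by
      have h1 := cntF_cons true (Fin.tail w)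
      rw [← hw] at h1
      rw [h1] at hF
      simpa using hF
    rw [hiw, hFt, pow_add]
/-- prepending `false` (no mark at position 1) -/
lemma sumT2 (L a b j : ℕ) :
    ∑ x ∈ (univ : Finset (Obj (L+1))).filter
        (fun x => PC (a+1) b j x ∧ x.1 0 = false ∧ ∀ i ∈ x.2, i.1 ≠ 1), qv ^ invW x.1
      = S L a b j := by
  rw [S]
  refine Finset.sum_nbij'
    (fun x => (Fin.tail x.1, shiftDown x.2))
    (fun y => (Fin.cons false y.1, y.2.map (Fin.succEmb L))) ?_ ?_ ?_ ?_ ?_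
  · -- forward membership
    rintro ⟨w, M⟩ hx
    simp only [mem_filter, mem_univ, true_and] at hx; simp only [PC] at hx
    obtain ⟨⟨hF, hT, hMk, hcard⟩, h0, h1⟩ := hx
    try dsimp only at hF hT hMk hcard h0 h1
    have hw : w = Fin.cons false (Fin.tail w) := by
      rw [← h0, Fin.cons_self_tail]
    simp only [mem_filter, mem_univ, true_and]; simp only [PC]
    refine ⟨?_, ?_, ?_, ?_⟩
    · have hc := cntF_cons false (Fin.tail w)
      rw [← hw] at hc
      rw [hc] at hF
      simp at hF
      omega
    · have hc := cntT_cons false (Fin.tail w)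
      rw [← hw] at hc
      rw [hc] at hT
      simpa using hT
    · intro i' hi'
      rw [mem_shiftDown] at hi'
      obtain ⟨ht, p, hp, hpf⟩ := hMk _ hi'
      refine ⟨ht, ?_⟩
      have hp1 : p.1 = i'.1 := by simp [Fin.val_succ] at hp; omega
      rcases Nat.eq_zero_or_pos i'.1 with h | h
      · exfalso
        exact h1 _ hi' (by simp [Fin.val_succ, h])
      · obtain ⟨p', rfl, hp'v⟩ := fin_pred p (p.1 - 1) (by omega)
        refine ⟨p', by simp [Fin.val_succ] at hp1 hp'v ⊢; omega, hpf⟩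
    · rw [card_shiftDown (zero_not_mem_marked hMk)]; exact hcard
  · -- backward membership
    rintro ⟨w', M'⟩ hy
    simp only [mem_filter, mem_univ, true_and] at hy ⊢; simp only [PC] at hy ⊢
    obtain ⟨hF, hT, hMk, hcard⟩ := hy
    try dsimp only at hF hT hMk hcard ⊢
    refine ⟨⟨?_, ?_, ?_, ?_⟩, by simp, ?_⟩
    · rw [cntF_cons]; simp [hF]; omega
    · rw [cntT_cons]; simpa using hT
    · intro i hi
      simp only [mem_map] at hi
      obtain ⟨i₀, hi₀, rfl⟩ := hi
      obtain ⟨ht, p', hp', hpf⟩ := hMk _ hi₀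
      refine ⟨by simpa [Fin.cons_succ] using ht, p'.succ, ?_, ?_⟩
      · show ((Fin.succEmb L) i₀).1 = p'.succ.1 + 1
        simp [Fin.val_succ, hp']
      · simpa [Fin.cons_succ] using hpf
    · rw [card_map]; exact hcard
    · -- no mark at position 1
      intro i hi
      simp only [mem_map] at hi
      obtain ⟨i₀, hi₀, rfl⟩ := hi
      obtain ⟨-, p', hp', -⟩ := hMk _ hi₀
      show ((Fin.succEmb L) i₀).1 ≠ 1
      simp [Fin.val_succ, hp']
  · -- left inverse
    rintro ⟨w, M⟩ hx
    simp only [mem_filter, mem_univ, true_and] at hx; simp only [PC] at hx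
    obtain ⟨⟨-, -, hMk, -⟩, h0, -⟩ := hx
    try dsimp only at hMk h0 ⊢
    refine Prod.ext ?_ ?_
    · show Fin.cons false (Fin.tail w) = w
      rw [← h0, Fin.cons_self_tail]
    · show (shiftDown M).map (Fin.succEmb L) = M
      exact map_shiftDown (zero_not_mem_marked hMk)
  · -- right inverse
    rintro ⟨w', M'⟩ _
    beta_reduce
    rw [shiftDown_map, Fin.tail_cons (α := fun _ : Fin (L+1) => Bool)]
  · -- values
    rintro ⟨w, M⟩ hx
    simp only [mem_filter, mem_univ, true_and] at hx; simp only [PC] at hx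
    obtain ⟨⟨hF, -, -, -⟩, h0, -⟩ := hx
    try dsimp only at hF h0 ⊢
    have hw : w = Fin.cons false (Fin.tail w) := by
      rw [← h0, Fin.cons_self_tail]
    have hiw : invW w = invW (Fin.tail w) := by
      conv_lhs => rw [hw]
      rw [invW_cons]; simp
    rw [hiw]
lemma mem_double_map {L : ℕ} {M' : Finset (Fin L)} {i : Fin (L+1+1)} :
    i ∈ (M'.map (Fin.succEmb L)).map (Fin.succEmb (L+1)) ↔ ∃ i₀ ∈ M', i = i₀.succ.succ := by
  simp only [mem_map]
  constructor
  · rintro ⟨i', ⟨i₀, hi₀, rfl⟩, rfl⟩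
    exact ⟨i₀, hi₀, rfl⟩
  · rintro ⟨i₀, hi₀, rfl⟩
    exact ⟨i₀.succ, ⟨i₀, hi₀, rfl⟩, rfl⟩

/-- prepending a marked rise `0 1*` -/
lemma sumT3 (L a b j : ℕ) :
    ∑ x ∈ (univ : Finset (Obj (L+1+1))).filter
        (fun x => PC (a+1) (b+1) (j+1) x ∧ x.1 0 = false ∧ ∃ i ∈ x.2, i.1 = 1),
          qv ^ invW x.1
      = qv ^ a * S L a b j := by
  rw [S, mul_sum]
  refine Finset.sum_nbij'
    (fun x => (Fin.tail (Fin.tail x.1), shiftDown (shiftDown x.2)))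
    (fun y => (Fin.cons false (Fin.cons true y.1),
      insert (Fin.succ 0) ((y.2.map (Fin.succEmb L)).map (Fin.succEmb (L+1))))) ?_ ?_ ?_ ?_ ?_
  all_goals
    rintro ⟨w, M⟩ hx
  -- shared simp for the three goals whose hypothesis is about the (L+2)-side
  case refine_2 =>
    -- backward membership: here (w, M) : Obj L is the small object
    simp only [mem_filter, mem_univ, true_and] at hx ⊢; simp only [PC] at hx ⊢
    obtain ⟨hF, hT, hMk, hcard⟩ := hx
    try dsimp only at hF hT hMk hcard ⊢
    have hns : (0 : Fin (L+1)).succ ∉ (M.map (Fin.succEmb L)).map (Fin.succEmb (L+1)) := by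
      rw [mem_double_map]
      rintro ⟨i₀, -, he⟩
      have := congrArg Fin.val he
      simp [Fin.val_succ] at this
    refine ⟨⟨?_, ?_, ?_, ?_⟩, by simp, ⟨Fin.succ 0, by simp, by simp [Fin.val_succ]⟩⟩
    · rw [cntF_cons, cntF_cons]; simp [hF]; omega
    · rw [cntT_cons, cntT_cons]; simp [hT]; omega
    · intro i hi
      rcases Finset.mem_insert.mp hi with rfl | hi
      · refine ⟨by simp [Fin.cons_succ, Fin.cons_zero], 0, by simp [Fin.val_succ], by simp⟩
      · rw [mem_double_map] at hi
        obtain ⟨i₀, hi₀, rfl⟩ := hi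
        obtain ⟨ht, p', hp', hpf⟩ := hMk _ hi₀
        refine ⟨by simpa [Fin.cons_succ] using ht, p'.succ.succ, ?_, ?_⟩
        · simp [Fin.val_succ, hp']
        · simpa [Fin.cons_succ] using hpf
    · rw [card_insert_of_notMem hns, card_map, card_map, hcard]
  case refine_4 =>
    -- right inverse
    beta_reduce
    have h2 : shiftDown (shiftDown (insert (Fin.succ 0)
        ((M.map (Fin.succEmb L)).map (Fin.succEmb (L+1))))) = M := by
      ext i
      rw [mem_shiftDown, mem_shiftDown, Finset.mem_insert, mem_double_map]
      constructor
      · rintro (he | ⟨i₀, hi₀, he⟩)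
        · exfalso
          have := congrArg Fin.val he
          simp [Fin.val_succ] at this
        · rwa [show i = i₀ from Fin.succ_injective _ (Fin.succ_injective _ he)]
      · intro hi
        exact Or.inr ⟨i, hi, rfl⟩
    rw [h2, Fin.tail_cons (α := fun _ : Fin (L+1+1) => Bool),
      Fin.tail_cons (α := fun _ : Fin (L+1) => Bool)]
  all_goals
    simp only [mem_filter, mem_univ, true_and] at hx; simp only [PC] at hx
  all_goals
    obtain ⟨⟨hF, hT, hMk, hcard⟩, h0, i1, hi1, hv1⟩ := hx
  all_goals
    try dsimp only at hF hT hMk hcard h0 hi1 hv1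
  all_goals
    have hs1 : (0 : Fin (L+1)).succ ∈ M := by
      rwa [show (0 : Fin (L+1)).succ = i1 from Fin.ext (by simp [Fin.val_succ, hv1])]
  all_goals
    have hw1 : w (Fin.succ 0) = true := (hMk _ hs1).1
  all_goals
    have hw : w = Fin.cons false (Fin.cons true (Fin.tail (Fin.tail w))) := by
      have e1 : w = Fin.cons (w 0) (Fin.tail w) := (Fin.cons_self_tail w).symm
      have e2 : Fin.tail w = Fin.cons (Fin.tail w 0) (Fin.tail (Fin.tail w)) :=
        (Fin.cons_self_tail (Fin.tail w)).symm
      have e3 : Fin.tail w 0 = w (Fin.succ 0) := rfl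
      rw [h0] at e1
      rw [e3, hw1] at e2
      rw [← e2, ← e1]
  case refine_1 =>
    -- forward membership
    simp only [mem_filter, mem_univ, true_and]; simp only [PC]
    refine ⟨?_, ?_, ?_, ?_⟩
    · have hc1 := cntF_cons false (Fin.cons true (Fin.tail (Fin.tail w)))
      have hc2 := cntF_cons true (Fin.tail (Fin.tail w))
      rw [← hw] at hc1
      rw [hc2] at hc1
      rw [hc1] at hF
      simp at hF
      omega
    · have hc1 := cntT_cons false (Fin.cons true (Fin.tail (Fin.tail w)))
      have hc2 := cntT_cons true (Fin.tail (Fin.tail w))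
      rw [← hw] at hc1
      rw [hc2] at hc1
      rw [hc1] at hT
      simp at hT
      omega
    · intro i'' hi''
      rw [mem_shiftDown, mem_shiftDown] at hi''
      obtain ⟨ht, p, hp, hpf⟩ := hMk _ hi''
      refine ⟨ht, ?_⟩
      have hp1 : p.1 = i''.1 + 1 := by simp [Fin.val_succ] at hp; omega
      rcases Nat.eq_zero_or_pos i''.1 with h | h
      · exfalso
        have hpz : p = (0 : Fin (L+1)).succ := Fin.ext (by simp [Fin.val_succ]; omega)
        rw [hpz, hw1] at hpf
        exact absurd hpf (by simp)
      · obtain ⟨p', rfl, hp'v⟩ := fin_pred p (p.1 - 1) (by omega)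
        obtain ⟨p'', rfl, hp''v⟩ := fin_pred p' (p'.1 - 1) (by omega)
        refine ⟨p'', by omega, hpf⟩
    · have hM : M = insert (Fin.succ 0)
          (((shiftDown (shiftDown M)).map (Fin.succEmb L)).map (Fin.succEmb (L+1))) := by
        ext i
        rw [Finset.mem_insert, mem_double_map]
        constructor
        · intro hi
          rcases Nat.lt_or_ge i.1 2 with h | h
          · rcases Nat.eq_zero_or_pos i.1 with h' | h'
            · exfalso
              rw [show i = 0 from Fin.ext h'] at hi
              exact zero_not_mem_marked hMk hi
            · exact Or.inl (Fin.ext (by simp [Fin.val_succ]; omega))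
          · obtain ⟨p', rfl, hp'v⟩ := fin_pred i (i.1 - 1) (by omega)
            obtain ⟨p'', rfl, hp''v⟩ := fin_pred p' (p'.1 - 1) (by omega)
            exact Or.inr ⟨p'', by rwa [mem_shiftDown, mem_shiftDown], rfl⟩
        · rintro (rfl | ⟨i₀, hi₀, rfl⟩)
          · exact hs1
          · rwa [mem_shiftDown, mem_shiftDown] at hi₀
      have hns : (0 : Fin (L+1)).succ ∉
          ((shiftDown (shiftDown M)).map (Fin.succEmb L)).map (Fin.succEmb (L+1)) := by
        rw [mem_double_map]
        rintro ⟨i₀, -, he⟩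
        have := congrArg Fin.val he
        simp [Fin.val_succ] at this
      have := congrArg Finset.card hM
      rw [card_insert_of_notMem hns, card_map, card_map, hcard] at this
      omega
  case refine_3 =>
    -- left inverse
    beta_reduce
    have hM : M = insert (Fin.succ 0)
        (((shiftDown (shiftDown M)).map (Fin.succEmb L)).map (Fin.succEmb (L+1))) := by
      ext i
      rw [Finset.mem_insert, mem_double_map]
      constructor
      · intro hi
        rcases Nat.lt_or_ge i.1 2 with h | h
        · rcases Nat.eq_zero_or_pos i.1 with h' | h'
          · exfalso
            rw [show i = 0 from Fin.ext h'] at hi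
            exact zero_not_mem_marked hMk hi
          · exact Or.inl (Fin.ext (by simp [Fin.val_succ]; omega))
        · obtain ⟨p', rfl, hp'v⟩ := fin_pred i (i.1 - 1) (by omega)
          obtain ⟨p'', rfl, hp''v⟩ := fin_pred p' (p'.1 - 1) (by omega)
          exact Or.inr ⟨p'', by rwa [mem_shiftDown, mem_shiftDown], rfl⟩
      · rintro (rfl | ⟨i₀, hi₀, rfl⟩)
        · exact hs1
        · rwa [mem_shiftDown, mem_shiftDown] at hi₀
    rw [← hw, ← hM]
  case refine_5 =>
    -- values
    have hiw : invW w = cntF (Fin.tail (Fin.tail w)) + invW (Fin.tail (Fin.tail w)) := by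
      conv_lhs => rw [hw]
      rw [invW_cons, invW_cons]; simp
    have hFt : cntF (Fin.tail (Fin.tail w)) = a := by
      have hc1 := cntF_cons false (Fin.cons true (Fin.tail (Fin.tail w)))
      have hc2 := cntF_cons true (Fin.tail (Fin.tail w))
      rw [← hw] at hc1
      rw [hc2] at hc1
      rw [hc1] at hF
      simp at hF
      omega
    beta_reduce
    rw [hiw, hFt, pow_add]
lemma S_split (L a b j : ℕ) :
    S (L+1) a b j
      = (∑ x ∈ (univ : Finset (Obj (L+1))).filter
          (fun x => PC a b j x ∧ x.1 0 = true), qv ^ invW x.1)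
      + (∑ x ∈ (univ : Finset (Obj (L+1))).filter
          (fun x => PC a b j x ∧ x.1 0 = false ∧ ∀ i ∈ x.2, i.1 ≠ 1), qv ^ invW x.1)
      + (∑ x ∈ (univ : Finset (Obj (L+1))).filter
          (fun x => PC a b j x ∧ x.1 0 = false ∧ ∃ i ∈ x.2, i.1 = 1), qv ^ invW x.1) := by
  rw [S, sum_filter, sum_filter, sum_filter, sum_filter, ← sum_add_distrib, ← sum_add_distrib]
  apply sum_congr rfl
  intro x _
  by_cases hPC : PC a b j x
  · by_cases h0 : x.1 0 = true
    · simp [hPC, h0]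
    · have h0' : x.1 0 = false := by simpa using h0
      by_cases hE : ∃ i ∈ x.2, i.1 = 1
      · have hE' : ¬ ∀ i ∈ x.2, i.1 ≠ 1 := by push_neg; exact hE
        simp [hPC, h0', hE, hE']
      · have hE' : ∀ i ∈ x.2, i.1 ≠ 1 := by push_neg at hE; exact hE
        simp only [hPC, h0', hE, true_and, if_false, Bool.false_eq_true, and_false,
          if_true, exists_prop, false_and, add_zero, zero_add]
        rw [if_pos hE']
  · simp [hPC]

lemma A1_eq (L a b j : ℕ) :
    (∑ x ∈ (univ : Finset (Obj (L+1))).filter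
        (fun x => PC a b j x ∧ x.1 0 = true), qv ^ invW x.1)
      = if 1 ≤ b then qv ^ a * S L a (b-1) j else 0 := by
  cases b with
  | zero =>
    rw [if_neg (by omega)]
    rw [Finset.filter_false_of_mem, sum_empty]
    rintro x - ⟨⟨-, hT, -, -⟩, h0⟩
    have : (0 : Fin (L+1)) ∈ univ.filter (fun i => x.1 i = true) := by
      simp [h0]
    rw [show univ.filter (fun i => x.1 i = true) = ∅ from
      Finset.card_eq_zero.mp hT] at this
    exact absurd this (by simp)
  | succ b' =>
    rw [if_pos (by omega), show b' + 1 - 1 = b' from rfl]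
    exact sumT1 L a b' j

lemma A2_eq (L a b j : ℕ) :
    (∑ x ∈ (univ : Finset (Obj (L+1))).filter
        (fun x => PC a b j x ∧ x.1 0 = false ∧ ∀ i ∈ x.2, i.1 ≠ 1), qv ^ invW x.1)
      = if 1 ≤ a then S L (a-1) b j else 0 := by
  cases a with
  | zero =>
    rw [if_neg (by omega)]
    rw [Finset.filter_false_of_mem, sum_empty]
    rintro x - ⟨⟨hF, -, -, -⟩, h0, -⟩
    have : (0 : Fin (L+1)) ∈ univ.filter (fun i => x.1 i = false) := by
      simp [h0]
    rw [show univ.filter (fun i => x.1 i = false) = ∅ from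
      Finset.card_eq_zero.mp hF] at this
    exact absurd this (by simp)
  | succ a' =>
    rw [if_pos (by omega), show a' + 1 - 1 = a' from rfl]
    exact sumT2 L a' b j

lemma A3_eq (L a b j : ℕ) :
    (∑ x ∈ (univ : Finset (Obj (L+1))).filter
        (fun x => PC a b j x ∧ x.1 0 = false ∧ ∃ i ∈ x.2, i.1 = 1), qv ^ invW x.1)
      = if 1 ≤ L ∧ 1 ≤ a ∧ 1 ≤ b ∧ 1 ≤ j then
          qv ^ (a-1) * S (L-1) (a-1) (b-1) (j-1) else 0 := by
  by_cases h : 1 ≤ L ∧ 1 ≤ a ∧ 1 ≤ b ∧ 1 ≤ j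
  · obtain ⟨hL, ha, hb, hj⟩ := h
    obtain ⟨L', rfl⟩ : ∃ L', L = L' + 1 := ⟨L - 1, by omega⟩
    obtain ⟨a', rfl⟩ : ∃ a', a = a' + 1 := ⟨a - 1, by omega⟩
    obtain ⟨b', rfl⟩ : ∃ b', b = b' + 1 := ⟨b - 1, by omega⟩
    obtain ⟨j', rfl⟩ : ∃ j', j = j' + 1 := ⟨j - 1, by omega⟩
    rw [if_pos (by omega)]
    simp only [Nat.add_sub_cancel]
    exact sumT3 L' a' b' j'
  · rw [if_neg h]
    rw [Finset.filter_false_of_mem, sum_empty]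
    rintro x - ⟨⟨hF, hT, hMk, hcard⟩, h0, i, hi, hv⟩
    apply h
    refine ⟨?_, ?_, ?_, ?_⟩
    · -- 1 ≤ L since some index has value 1
      by_contra hL
      have : L = 0 := by omega
      subst this
      have := i.2
      omega
    · -- 1 ≤ a
      by_contra ha
      have hF0 : cntF x.1 = 0 := by omega
      simp only [cntF] at hF0
      have : (0 : Fin (L+1)) ∈ univ.filter (fun i => x.1 i = false) := by simp [h0]
      rw [Finset.card_eq_zero.mp hF0] at this
      exact absurd this (by simp)
    · -- 1 ≤ b
      by_contra hb
      have hT0 : cntT x.1 = 0 := by omega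
      have hit := (hMk i hi).1
      have : i ∈ univ.filter (fun i => x.1 i = true) := by simp [hit]
      simp only [cntT] at hT0
      rw [Finset.card_eq_zero.mp hT0] at this
      exact absurd this (by simp)
    · -- 1 ≤ j
      by_contra hj
      have : x.2 = ∅ := Finset.card_eq_zero.mp (by omega)
      rw [this] at hi
      exact absurd hi (by simp)
def cf (L a b j : ℕ) : R2 :=
  if a + b = L ∧ j ≤ b then qv ^ (Nat.choose j 2) * qBinom a j * qBinom (a + b - j) a else 0

lemma choose_two_succ (j : ℕ) : Nat.choose (j+1) 2 = Nat.choose j 2 + j := by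
  rw [Nat.choose_two_right, Nat.choose_two_right, Nat.triangle_succ]

lemma cf_rec (L a b j : ℕ) :
    cf (L+1) a b j
      = (if 1 ≤ b then qv ^ a * cf L a (b-1) j else 0)
        + (if 1 ≤ a then cf L (a-1) b j else 0)
        + (if 1 ≤ L ∧ 1 ≤ a ∧ 1 ≤ b ∧ 1 ≤ j then
            qv ^ (a-1) * cf (L-1) (a-1) (b-1) (j-1) else 0) := by
  by_cases hL : a + b = L + 1
  case neg =>
    rw [cf, if_neg (by omega)]
    rw [show (if 1 ≤ b then qv ^ a * cf L a (b-1) j else 0) = 0 by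
      split_ifs with h
      · rw [cf, if_neg (by omega), mul_zero]
      · rfl]
    rw [show (if 1 ≤ a then cf L (a-1) b j else 0) = 0 by
      split_ifs with h
      · rw [cf, if_neg (by omega)]
      · rfl]
    rw [show (if 1 ≤ L ∧ 1 ≤ a ∧ 1 ≤ b ∧ 1 ≤ j then
        qv ^ (a-1) * cf (L-1) (a-1) (b-1) (j-1) else 0) = 0 by
      split_ifs with h
      · rw [cf, if_neg (by omega), mul_zero]
      · rfl]
    ring
  case pos =>
  cases j with
  | zero =>
    rw [if_neg (show ¬(1 ≤ L ∧ 1 ≤ a ∧ 1 ≤ b ∧ 1 ≤ 0) from fun h => by omega), add_zero]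
    cases a with
    | zero =>
      obtain ⟨b', rfl⟩ : ∃ b', b = b' + 1 := ⟨b - 1, by omega⟩
      rw [if_pos (show 1 ≤ b' + 1 by omega), if_neg (show ¬ (1:ℕ) ≤ 0 by omega)]
      rw [cf, if_pos (by omega), cf, if_pos (by omega)]
      rw [show b' + 1 - 1 = b' from rfl]
      rw [show (0:ℕ) + (b'+1) - 0 = b' + 1 by omega, show (0:ℕ) + b' - 0 = b' by omega]
      rw [qBinom_zero, qBinom_zero, qBinom_zero]
      ring
    | succ a' =>
      cases b with
      | zero =>
        rw [if_neg (show ¬ (1:ℕ) ≤ 0 by omega), if_pos (show 1 ≤ a' + 1 by omega)]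
        rw [cf, if_pos (by omega), cf, if_pos (by omega)]
        rw [show a' + 1 - 1 = a' from rfl]
        rw [show a' + 1 + 0 - 0 = a' + 1 by omega, show a' + 0 - 0 = a' by omega]
        rw [qBinom_zero, qBinom_zero, qBinom_self, qBinom_self]
        ring
      | succ b' =>
        rw [if_pos (show 1 ≤ b' + 1 by omega), if_pos (show 1 ≤ a' + 1 by omega)]
        rw [cf, if_pos (by omega), cf, if_pos (by omega), cf, if_pos (by omega)]
        rw [show b' + 1 - 1 = b' from rfl, show a' + 1 - 1 = a' from rfl]
        rw [show a' + 1 + (b'+1) - 0 = (a' + b' + 1) + 1 by omega,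
          show a' + 1 + b' - 0 = a' + b' + 1 by omega,
          show a' + (b'+1) - 0 = a' + b' + 1 by omega]
        rw [qBinom_zero (a'+1), qBinom_zero a', qBinom_succ_succ (a' + b' + 1) a']
        ring
  | succ j' =>
    cases b with
    | zero =>
      rw [cf, if_neg (fun h => by omega)]
      rw [if_neg (show ¬ (1:ℕ) ≤ 0 by omega),
        if_neg (show ¬(1 ≤ L ∧ 1 ≤ a ∧ 1 ≤ 0 ∧ 1 ≤ j'+1) from fun h => by omega)]
      rw [show (if 1 ≤ a then cf L (a-1) 0 (j'+1) else 0) = 0 by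
        split_ifs with h
        · rw [cf, if_neg (fun hh => by omega)]
        · rfl]
      ring
    | succ b' =>
      cases a with
      | zero =>
        rw [if_pos (show 1 ≤ b' + 1 by omega), if_neg (show ¬ (1:ℕ) ≤ 0 by omega),
          if_neg (show ¬(1 ≤ L ∧ 1 ≤ 0 ∧ 1 ≤ b'+1 ∧ 1 ≤ j'+1) from fun h => by omega)]
        rw [show cf (L+1) 0 (b'+1) (j'+1) = 0 by
          rw [cf]
          split_ifs with h
          · rw [show qBinom 0 (j'+1) = 0 from rfl]; ring
          · rfl]
        rw [show cf L 0 (b'+1-1) (j'+1) = 0 by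
          rw [cf]
          split_ifs with h
          · rw [show qBinom 0 (j'+1) = 0 from rfl]; ring
          · rfl]
        ring
      | succ a' =>
        rw [if_pos (show 1 ≤ b' + 1 by omega), if_pos (show 1 ≤ a' + 1 by omega)]
        cases L with
        | zero => omega
        | succ L'' =>
        rw [if_pos (show 1 ≤ L'' + 1 ∧ 1 ≤ a' + 1 ∧ 1 ≤ b' + 1 ∧ 1 ≤ j' + 1 by omega)]
        rw [show b' + 1 - 1 = b' from rfl, show a' + 1 - 1 = a' from rfl,
          show j' + 1 - 1 = j' from rfl, show L'' + 1 - 1 = L'' from rfl]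
        by_cases hjb : j' ≤ b'
        case neg =>
          rw [cf, if_neg (fun h => by omega)]
          rw [show cf (L''+1) (a'+1) b' (j'+1) = 0 from by
            rw [cf, if_neg (fun h => by omega)]]
          rw [show cf (L''+1) a' (b'+1) (j'+1) = 0 from by
            rw [cf, if_neg (fun h => by omega)]]
          rw [show cf L'' a' b' j' = 0 from by
            rw [cf, if_neg (fun h => by omega)]]
          ring
        case pos =>
        obtain ⟨e, rfl⟩ : ∃ e, b' = j' + e := ⟨b' - j', by omega⟩
        rw [cf, if_pos (by omega)]
        rw [show cf (L''+1) (a'+1) (j'+e) (j'+1) =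
            (if j' + 1 ≤ j' + e then qv ^ (Nat.choose (j'+1) 2) * qBinom (a'+1) (j'+1)
              * qBinom (a' + e) (a'+1) else 0) from by
          by_cases hje : j' + 1 ≤ j' + e
          · rw [cf, if_pos (by omega), if_pos hje,
              show a' + 1 + (j' + e) - (j' + 1) = a' + e by omega]
          · rw [cf, if_neg (fun h => by omega), if_neg hje]]
        rw [show cf (L''+1) a' (j'+e+1) (j'+1) =
            qv ^ (Nat.choose (j'+1) 2) * qBinom a' (j'+1) * qBinom (a' + e) a' from by
          rw [cf, if_pos (by omega), show a' + (j'+e+1) - (j'+1) = a' + e by omega]]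
        rw [show cf L'' a' (j'+e) j' =
            qv ^ (Nat.choose j' 2) * qBinom a' j' * qBinom (a' + e) a' from by
          rw [cf, if_pos (by omega), show a' + (j'+e) - j' = a' + e by omega]]
        rw [show a' + 1 + (j' + e + 1) - (j' + 1) = (a' + e) + 1 by omega]
        rw [choose_two_succ]
        rw [qBinom_succ_succ (a' + e) a']
        by_cases hja : j' ≤ a'
        · have hp2 : qBinom (a' + 1) (j' + 1)
              = qBinom a' (j' + 1) + qv ^ (a' - j') * qBinom a' j' := qBinom_pascal2 a' hja
          obtain ⟨dd, hdd⟩ : ∃ dd, a' = j' + dd := ⟨a' - j', by omega⟩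
          by_cases hje : j' + 1 ≤ j' + e
          · rw [if_pos hje, hp2, hdd, show j' + dd - j' = dd by omega]
            ring
          · rw [if_neg hje]
            have he : e = 0 := by omega
            subst he
            rw [show qBinom (a' + 0) (a' + 1) = 0 from
              qBinom_eq_zero_of_lt (by omega)]
            rw [hp2, hdd, show j' + dd - j' = dd by omega]
            ring
        · rw [show qBinom (a'+1) (j'+1) = 0 from qBinom_eq_zero_of_lt (by omega)]
          rw [show qBinom a' (j'+1) = 0 from qBinom_eq_zero_of_lt (by omega)]
          rw [show qBinom a' j' = 0 from qBinom_eq_zero_of_lt (by omega)]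
          split_ifs <;> ring
lemma S_zero (a b j : ℕ) : S 0 a b j = if a = 0 ∧ b = 0 ∧ j = 0 then 1 else 0 := by
  have hx : ∀ x : Obj 0, cntF x.1 = 0 ∧ cntT x.1 = 0 ∧ x.2 = ∅ ∧ invW x.1 = 0 := by
    intro x
    refine ⟨?_, ?_, ?_, ?_⟩
    · simp [cntF]
    · simp [cntT]
    · exact Finset.eq_empty_of_isEmpty _
    · simp [invW]
  by_cases h : a = 0 ∧ b = 0 ∧ j = 0
  · obtain ⟨rfl, rfl, rfl⟩ := h
    rw [if_pos ⟨rfl, rfl, rfl⟩, S]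
    have hfil : (univ : Finset (Obj 0)).filter (PC 0 0 0) = univ := by
      apply Finset.filter_true_of_mem
      intro x _
      obtain ⟨h1, h2, h3, h4⟩ := hx x
      exact ⟨h1, h2, by rw [h3]; intro i hi; exact absurd hi (by simp), by rw [h3]; simp⟩
    rw [hfil]
    have : ∀ x : Obj 0, qv ^ invW x.1 = 1 := by
      intro x; rw [(hx x).2.2.2, pow_zero]
    rw [Finset.sum_congr rfl (fun x _ => this x), Finset.sum_const, card_univ]
    have hcard : Fintype.card (Obj 0) = 1 := by
      simp [Fintype.card_prod]
    rw [hcard]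
    simp
  · rw [if_neg h, S]
    rw [Finset.filter_false_of_mem, sum_empty]
    rintro x _ ⟨h1, h2, h3, h4⟩
    obtain ⟨g1, g2, g3, g4⟩ := hx x
    exact h ⟨by omega, by omega, by rw [g3] at h4; simp at h4; omega⟩

lemma S_eq_cf : ∀ L a b j : ℕ, S L a b j = cf L a b j := by
  intro L
  induction L using Nat.strong_induction_on with
  | _ L ih =>
    match L with
    | 0 =>
      intro a b j
      rw [S_zero, cf]
      by_cases h : a = 0 ∧ b = 0 ∧ j = 0
      · obtain ⟨rfl, rfl, rfl⟩ := h
        rw [if_pos ⟨rfl, rfl, rfl⟩, if_pos (by omega)]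
        rw [qBinom_zero]
        simp
      · rw [if_neg h, if_neg (fun hh => h (by omega))]
    | L + 1 =>
      intro a b j
      rw [S_split, A1_eq, A2_eq, A3_eq]
      rw [cf_rec]
      congr 1
      · congr 1
        · split_ifs with h
          · rw [ih L (by omega)]
          · rfl
        · split_ifs with h
          · rw [ih L (by omega)]
          · rfl
      · split_ifs with h
        · rw [ih (L-1) (by omega)]
        · rfl

lemma A_split (L a b j : ℕ) :
    (∑ x ∈ (univ : Finset (Obj (L+1))).filter
        (fun y => PC a b j y ∧ y.1 0 = false), qv ^ invW x.1)
      = (∑ x ∈ (univ : Finset (Obj (L+1))).filter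
          (fun x => PC a b j x ∧ x.1 0 = false ∧ ∀ i ∈ x.2, i.1 ≠ 1), qv ^ invW x.1)
        + (∑ x ∈ (univ : Finset (Obj (L+1))).filter
          (fun x => PC a b j x ∧ x.1 0 = false ∧ ∃ i ∈ x.2, i.1 = 1), qv ^ invW x.1) := by
  rw [sum_filter, sum_filter, sum_filter, ← sum_add_distrib]
  apply sum_congr rfl
  intro x _
  by_cases hPC : PC a b j x
  · by_cases h0 : x.1 0 = false
    · by_cases hE : ∃ i ∈ x.2, i.1 = 1
      · have hE' : ¬ ∀ i ∈ x.2, i.1 ≠ 1 := by push_neg; exact hE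
        rw [if_pos (⟨hPC, h0⟩ : PC a b j x ∧ x.1 0 = false),
          if_neg (fun hh => hE' hh.2.2), if_pos ⟨hPC, h0, hE⟩, zero_add]
      · have hE' : ∀ i ∈ x.2, i.1 ≠ 1 := by push_neg at hE; exact hE
        rw [if_pos (⟨hPC, h0⟩ : PC a b j x ∧ x.1 0 = false),
          if_pos ⟨hPC, h0, hE'⟩, if_neg (fun hh => hE hh.2.2), add_zero]
    · rw [if_neg (fun hh => h0 hh.2), if_neg (fun hh => h0 hh.2.1),
        if_neg (fun hh => h0 hh.2.1), add_zero]
  · rw [if_neg (fun hh => hPC hh.1), if_neg (fun hh => hPC hh.1),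
      if_neg (fun hh => hPC hh.1), add_zero]

lemma Afinal (M N J : ℕ) :
    (∑ x ∈ (univ : Finset (Obj (M+N+1))).filter
        (fun y => PC (M+1) N J y ∧ y.1 0 = false), qv ^ invW x.1)
      = if J ≤ N then qv ^ (Nat.choose J 2) * qBinom (M+1) J * qBinom (M+N-J) M else 0 := by
  rw [A_split (M+N) (M+1) N J, A2_eq, A3_eq]
  rw [if_pos (show 1 ≤ M + 1 by omega)]
  rw [show M + 1 - 1 = M from rfl]
  rw [S_eq_cf]
  cases J with
  | zero =>
    rw [if_neg (show ¬(1 ≤ M+N ∧ 1 ≤ M+1 ∧ 1 ≤ N ∧ 1 ≤ 0) from fun h => by omega), add_zero]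
    rw [if_pos (show 0 ≤ N by omega)]
    rw [cf, if_pos (by omega)]
    rw [qBinom_zero, qBinom_zero]
  | succ J' =>
    by_cases hJN : J' + 1 ≤ N
    · obtain ⟨N'', rfl⟩ : ∃ N'', N = N'' + 1 := ⟨N - 1, by omega⟩
      rw [if_pos (show 1 ≤ M+(N''+1) ∧ 1 ≤ M+1 ∧ 1 ≤ N''+1 ∧ 1 ≤ J'+1 by omega)]
      rw [show M + (N''+1) - 1 = M + N'' by omega, show N'' + 1 - 1 = N'' from rfl,
        show J' + 1 - 1 = J' from rfl]
      rw [S_eq_cf]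
      rw [if_pos hJN]
      rw [cf, if_pos (by omega), cf, if_pos (by omega)]
      rw [show M + (N''+1) - (J'+1) = M + N'' - J' by omega]
      rw [choose_two_succ]
      by_cases hja : J' ≤ M
      · have hp2 : qBinom (M + 1) (J' + 1)
            = qBinom M (J' + 1) + qv ^ (M - J') * qBinom M J' := qBinom_pascal2 M hja
        obtain ⟨dd, hdd⟩ : ∃ dd, M = J' + dd := ⟨M - J', by omega⟩
        rw [hp2, hdd, show J' + dd - J' = dd by omega]
        ring
      · rw [show qBinom (M+1) (J'+1) = 0 from qBinom_eq_zero_of_lt (by omega)]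
        rw [show qBinom M (J'+1) = 0 from qBinom_eq_zero_of_lt (by omega)]
        rw [show qBinom M J' = 0 from qBinom_eq_zero_of_lt (by omega)]
        ring
    · rw [if_neg hJN]
      rw [cf, if_neg (fun h => by omega)]
      rw [show (if 1 ≤ M+N ∧ 1 ≤ M+1 ∧ 1 ≤ N ∧ 1 ≤ J'+1 then
          qv ^ M * S (M+N-1) M (N-1) (J'+1-1) else 0) = 0 by
        split_ifs with h
        · rw [S_eq_cf, cf, if_neg (fun hh => by omega), mul_zero]
        · rfl]
      ring
lemma int_exp (J : ℕ) : (((J:ℤ) * ((J:ℤ) - 1)) / 2).toNat = Nat.choose J 2 := by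
  cases J with
  | zero => norm_num
  | succ J' =>
    have h0 : ((J' + 1 : ℕ) : ℤ) - 1 = (J' : ℤ) := by push_cast; ring
    have h1 : ((J'+1 : ℕ) : ℤ) * (((J'+1 : ℕ) : ℤ) - 1) / 2 = (((J'+1) * J' / 2 : ℕ) : ℤ) := by
      rw [h0, ← Nat.cast_mul]
      norm_cast
    rw [h1, Int.toNat_natCast, Nat.choose_two_right, Nat.add_sub_cancel]

lemma qBinomZ_natCast (A B : ℕ) : qBinomZ (A:ℤ) (B:ℤ) = qBinom A B := by
  rw [qBinomZ]
  by_cases h : B ≤ A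
  · rw [if_pos ⟨Int.natCast_nonneg B, by exact_mod_cast h⟩,
      Int.toNat_natCast, Int.toNat_natCast]
  · rw [if_neg (fun hh => h (by exact_mod_cast hh.2))]
    exact (qBinom_eq_zero_of_lt (show A < B by omega)).symm

section RPside
variable {M N : ℕ}

lemma rp_even_zero {c : Fin (M+N+1) → Fin (2*(M+N+1))} (h : IsRPWord M N c)
    (hr : (univ.filter fun i => (c i : ℕ) = 0).card = M + 1) :
    ∀ i, (c i : ℕ) % 2 = 0 → (c i : ℕ) = 0 := by
  have hsub : (univ.filter fun i => (c i : ℕ) = 0)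
      ⊆ (univ.filter fun i => (c i : ℕ) % 2 = 0) := by
    intro i hi
    simp only [mem_filter, mem_univ, true_and] at hi ⊢
    omega
  have heq := Finset.eq_of_subset_of_card_le hsub (by rw [hr, h.2.2.1])
  intro i hi
  have : i ∈ (univ.filter fun i => (c i : ℕ) % 2 = 0) := by
    simp only [mem_filter, mem_univ, true_and]; exact hi
  rw [← heq] at this
  simp only [mem_filter, mem_univ, true_and] at this
  exact this

lemma rp_le_one {c : Fin (M+N+1) → Fin (2*(M+N+1))} (h : IsRPWord M N c)
    (hr : (univ.filter fun i => (c i : ℕ) = 0).card = M + 1) :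
    ∀ i, (c i : ℕ) ≤ 1 := by
  have hev := rp_even_zero h hr
  have H : ∀ v (i : Fin (M+N+1)), i.1 = v → (c i : ℕ) ≤ 1 := by
    intro v
    induction v with
    | zero => intro i hi; rw [h.1 i hi]; omega
    | succ v ihv =>
      intro i hi
      have hv : v < M + N + 1 := by have := i.2; omega
      have hle := h.2.1 ⟨v, hv⟩ i (by simp [hi])
      have h1 := ihv ⟨v, hv⟩ rfl
      rcases Nat.lt_or_ge (c i : ℕ) 2 with hh | hh
      · omega
      · have h2 := hev i (by omega)
        omega
  exact fun i => H i.1 i rfl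

lemma rp_area_zero {x : RPCand M N}
    (hle : ∀ i, (x.1 i : ℕ) ≤ 1) : areaRPstar x = 0 := by
  rw [areaRPstar]
  apply Finset.sum_eq_zero
  intro i _
  exact Nat.div_eq_of_lt (by have := hle i; omega)

end RPside

/-- For `m, n, k, j ≥ 0`, the `(dinv, area)` q,t-enumerator of
doubly decorated reduced polyominoes satisfies
`RP_{q,t}(m∖(m+1), n)^{∗k,j}
  = δ_{k,0} ⬝ q^(binom j 2) ⬝ [m+1 choose j]_q ⬝ [m+n-j choose m]_q`. -/
theorem RPstar_base (m n k j : ℤ) (hm : 0 ≤ m) (hn : 0 ≤ n) (hk : 0 ≤ k) (hj : 0 ≤ j) :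
    RPdE m n (m + 1) k j =
      (if k = 0 then 1 else 0) * qv ^ (j * (j - 1) / 2).toNat *
        qBinomZ (m + 1) j * qBinomZ (m + n - j) m := by
  lift m to ℕ using hm with M
  lift n to ℕ using hn with N
  lift k to ℕ using hk with K
  lift j to ℕ using hj with J
  simp only [RPdE]
  rw [if_pos ⟨Int.natCast_nonneg M, Int.natCast_nonneg N, by omega,
    Int.natCast_nonneg K, Int.natCast_nonneg J⟩]
  rw [show ((M:ℤ)).toNat = M from Int.toNat_natCast M,
    show ((N:ℤ)).toNat = N from Int.toNat_natCast N,
    show ((K:ℤ)).toNat = K from Int.toNat_natCast K,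
    show ((J:ℤ)).toNat = J from Int.toNat_natCast J,
    show ((M:ℤ) + 1).toNat = M + 1 by omega]
  rw [show ((J:ℤ) * ((J:ℤ) - 1) / 2).toNat = Nat.choose J 2 from int_exp J]
  rw [show (M:ℤ) + 1 = ((M + 1 : ℕ) : ℤ) by push_cast; ring, qBinomZ_natCast]
  by_cases hK : K = 0
  case neg =>
    -- the set is empty
    rw [Finset.filter_false_of_mem, sum_empty,
      if_neg (show ¬ (K:ℤ) = 0 by exact_mod_cast hK)]
    · ring
    · rintro x _ ⟨hw, hU, hU0, hB, hBJ, hr⟩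
      apply hK
      rw [← hU0]
      rw [Finset.card_eq_zero]
      by_contra hne
      obtain ⟨i, hi⟩ := Finset.nonempty_iff_ne_empty.mpr hne
      obtain ⟨hevi, jj, hjj, heq⟩ := hU i hi
      have hle := rp_le_one hw hr
      have := hle i
      have h0 : (x.1 i : ℕ) = 0 := rp_even_zero hw hr i hevi
      omega
  case pos =>
    subst hK
    rw [if_pos (show ((0:ℕ):ℤ) = 0 from rfl)]
    have hLHS : (∑ x ∈ (univ : Finset (RPCand M N)).filter (IsRPstar M N (M+1) 0 J),
          qv ^ dinvRPstar x * tv ^ areaRPstar x)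
        = ∑ y ∈ (univ : Finset (Obj (M+N+1))).filter
            (fun y => PC (M+1) N J y ∧ y.1 0 = false), qv ^ invW y.1 := by
      refine Finset.sum_nbij'
        (fun x => ((fun i => decide ((x.1 i : ℕ) = 1)), x.2.2))
        (fun y => ((fun i => if y.1 i = true then
            (⟨1, by omega⟩ : Fin (2*(M+N+1))) else ⟨0, by omega⟩), ∅, y.2)) ?_ ?_ ?_ ?_ ?_
      · -- forward membership
        rintro ⟨c, K1, M2⟩ hx
        simp only [mem_filter, mem_univ, true_and, IsRPstar] at hx
        obtain ⟨hw, hU, hU0, hB, hBJ, hr⟩ := hx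
        try dsimp only at hw hU hU0 hB hBJ hr
        have hle := rp_le_one hw hr
        simp only [mem_filter, mem_univ, true_and]; simp only [PC]
        refine ⟨⟨?_, ?_, ?_, hBJ⟩, ?_⟩
        · rw [cntF]
          rw [show (univ.filter fun i : Fin (M+N+1) => decide ((c i : ℕ) = 1) = false)
              = univ.filter fun i => (c i : ℕ) = 0 from
            Finset.filter_congr (fun i _ => by
              simp only [decide_eq_false_iff_not]
              have := hle i
              constructor <;> intro <;> omega)]
          exact hr
        · rw [cntT]
          rw [show (univ.filter fun i : Fin (M+N+1) => decide ((c i : ℕ) = 1) = true)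
              = univ.filter fun i => (c i : ℕ) % 2 = 1 from
            Finset.filter_congr (fun i _ => by
              simp only [decide_eq_true_eq]
              have := hle i
              constructor <;> intro <;> omega)]
          exact hw.2.2.2
        · intro i hi
          obtain ⟨hodd, jj, hjj, heq⟩ := hB i hi
          have h1 : (c i : ℕ) = 1 := by have := hle i; omega
          have h2 : (c jj : ℕ) = 0 := by omega
          exact ⟨by simp [h1], jj, hjj, by simp [h2]⟩
        · have h0 : (c 0 : ℕ) = 0 := hw.1 0 rfl
          simp [h0]
      · -- backward membership
        rintro ⟨w, M2⟩ hy
        simp only [mem_filter, mem_univ, true_and] at hy; simp only [PC] at hy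
        obtain ⟨⟨hF, hT, hMk, hcard⟩, h0⟩ := hy
        try dsimp only at hF hT hMk hcard h0
        have hval : ∀ i, (((fun i => if w i = true then
            (⟨1, by omega⟩ : Fin (2*(M+N+1))) else ⟨0, by omega⟩) i : Fin (2*(M+N+1))) : ℕ)
            = if w i = true then 1 else 0 := by
          intro i
          by_cases h : w i = true <;> simp [h, Nat.mod_eq_of_lt (show 1 < 2*(M+N+1) by omega)]
        simp only [mem_filter, mem_univ, true_and, IsRPstar]
        refine ⟨⟨?_, ?_, ?_, ?_⟩, ?_, ?_, ?_, ?_, ?_⟩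
        · intro i hi
          rw [hval]
          rw [show i = 0 from Fin.ext hi, h0]
          simp
        · intro i jj _
          rw [hval, hval]
          by_cases h1 : w jj = true <;> by_cases h2 : w i = true <;> simp [h1, h2]
        · rw [show (univ.filter fun i : Fin (M+N+1) =>
              (((fun i => if w i = true then (⟨1, by omega⟩ : Fin (2*(M+N+1)))
                else ⟨0, by omega⟩) i : Fin (2*(M+N+1))) : ℕ) % 2 = 0)
              = univ.filter fun i => w i = false from
            Finset.filter_congr (fun i _ => by
              rw [hval]
              by_cases h : w i = true <;> simp [h])]
          rw [← cntF, hF]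
        · rw [show (univ.filter fun i : Fin (M+N+1) =>
              (((fun i => if w i = true then (⟨1, by omega⟩ : Fin (2*(M+N+1)))
                else ⟨0, by omega⟩) i : Fin (2*(M+N+1))) : ℕ) % 2 = 1)
              = univ.filter fun i => w i = true from
            Finset.filter_congr (fun i _ => by
              rw [hval]
              by_cases h : w i = true <;> simp [h])]
          rw [← cntT, hT]
        · intro i hi
          exact absurd hi (by simp)
        · simp
        · intro i hi
          obtain ⟨ht, i', hi', hif⟩ := hMk i hi
          refine ⟨by rw [hval]; simp [ht], i', hi', ?_⟩
          rw [hval, hval, ht, hif]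
          simp
        · exact hcard
        · rw [show (univ.filter fun i : Fin (M+N+1) =>
              (((fun i => if w i = true then (⟨1, by omega⟩ : Fin (2*(M+N+1)))
                else ⟨0, by omega⟩) i : Fin (2*(M+N+1))) : ℕ) = 0)
              = univ.filter fun i => w i = false from
            Finset.filter_congr (fun i _ => by
              rw [hval]
              by_cases h : w i = true <;> simp [h])]
          rw [← cntF, hF]
      · -- left inverse
        rintro ⟨c, K1, M2⟩ hx
        simp only [mem_filter, mem_univ, true_and, IsRPstar] at hx
        obtain ⟨hw, hU, hU0, hB, hBJ, hr⟩ := hx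
        try dsimp only at hw hU hU0 hB hBJ hr
        have hle := rp_le_one hw hr
        beta_reduce
        refine Prod.ext ?_ (Prod.ext ?_ rfl)
        · funext i
          apply Fin.ext
          have := hle i
          rcases Nat.lt_or_ge (c i : ℕ) 1 with h | h
          · have h0 : (c i : ℕ) = 0 := by omega
            simp [h0]
          · have h1 : (c i : ℕ) = 1 := by omega
            simp [h1, Nat.mod_eq_of_lt (show 1 < 2*(M+N+1) by omega)]
        · exact (Finset.card_eq_zero.mp hU0).symm
      · -- right inverse
        rintro ⟨w, M2⟩ _
        beta_reduce
        refine Prod.ext ?_ rfl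
        · funext i
          by_cases h : w i = true <;> simp [h, Nat.mod_eq_of_lt (show 1 < 2*(M+N+1) by omega)]
      · -- values
        rintro ⟨c, K1, M2⟩ hx
        try dsimp only
        simp only [mem_filter, mem_univ, true_and, IsRPstar] at hx
        obtain ⟨hw, hU, hU0, hB, hBJ, hr⟩ := hx
        try dsimp only at hw hU hU0 hB hBJ hr
        have hle := rp_le_one hw hr
        rw [rp_area_zero hle, pow_zero, mul_one]
        congr 1
        rw [dinvRPstar, invW, card_filter, card_filter]
        apply sum_congr rfl
        intro p _
        congr 1
        apply propext
        constructor
        · rintro ⟨hlt, he⟩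
          try dsimp only at he
          have h1 := hle p.1
          have h2 := hle p.2
          refine ⟨hlt, by simp; omega, by simp; omega⟩
        · rintro ⟨hlt, h1, h2⟩
          try dsimp only at h1 h2
          simp only [decide_eq_true_eq, decide_eq_false_iff_not] at h1 h2
          have g1 := hle p.1
          have g2 := hle p.2
          refine ⟨hlt, ?_⟩
          show ((c, K1, M2).1 p.1 : ℕ) = ((c, K1, M2).1 p.2 : ℕ) + 1
          dsimp only
          omega
    rw [hLHS, Afinal]
    by_cases hJN : J ≤ N
    · rw [if_pos hJN]
      rw [show (M:ℤ) + (N:ℤ) - (J:ℤ) = ((M + N - J : ℕ) : ℤ) by omega, qBinomZ_natCast]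
      ring
    · rw [if_neg hJN]
      rw [show qBinomZ ((M:ℤ) + (N:ℤ) - (J:ℤ)) (M:ℤ) = 0 from by
        rw [qBinomZ, if_neg (fun h => by omega)]]
      ring
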